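/- Consider a Voter Interval approval election: voters are {1,…,n}, C is a finite set of candidates, and each candidate c ∈ C has a nonempty supporter interval I_c ⊆ {1,…,n} (the set of voters approving c, which is an interval of consecutive voters). Each voter v has a non-increasing weight sequence w^v : ℕ → ℝ with 1 ≥ w^v_1 ≥ w^v_2 ≥ … ≥ 0, and the score of a committee W ⊆ C is score(W) = ∑_{v=1}^n ∑_{i=1}^{|{c ∈ W : v ∈ I_c}|} w^v_i. Then for every integer k ≥ 1 and all committees S, S' ⊆ C with |S| = k − 1 and |S'| = k + 1, there exists a committee W ⊆ S ∪ S' with |W| = k and 2·score(W) ≥ score(S) + score(S'). In particular, the maximum score of a size-k committee is a concave function of k on Voter Interval profiles. -/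

import Mathlib

set_option linter.unusedSectionVars false
set_option linter.unnecessarySeqFocus false
set_option linter.unusedVariables false

namespace Stmt12

open Finset

variable {C : Type*} [DecidableEq C]

/-- number of members of `W` whose interval contains voter `v` -/
def cnt (I : C → ℕ × ℕ) (W : Finset C) (v : ℕ) : ℕ :=
  (W.filter fun c => (I c).1 ≤ v ∧ v ≤ (I c).2).card

lemma cnt_insert (I : C → ℕ × ℕ) {W : Finset C} {a : C} (ha : a ∉ W) (v : ℕ) :
    cnt I (insert a W) v = cnt I W v + (if (I a).1 ≤ v ∧ v ≤ (I a).2 then 1 else 0) := by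
  unfold cnt
  rw [filter_insert]
  split_ifs with h
  · rw [card_insert_of_notMem (fun hmem => ha (mem_of_mem_filter a hmem))]
  · simp

lemma cnt_union (I : C → ℕ × ℕ) {A B : Finset C} (hAB : Disjoint A B) (v : ℕ) :
    cnt I (A ∪ B) v = cnt I A v + cnt I B v := by
  unfold cnt
  rw [filter_union, card_union_of_disjoint (disjoint_filter_filter hAB)]

/-- sum over an Icc with successor top -/
lemma sum_Icc_top (g : ℕ → ℝ) {a b : ℕ} (h : a ≤ b + 1) :
    ∑ i ∈ Icc a (b + 1), g i = (∑ i ∈ Icc a b, g i) + g (b + 1) := by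
  have : Icc a (b+1) = insert (b+1) (Icc a b) := by
    ext i; simp only [mem_Icc, mem_insert]; omega
  rw [this, sum_insert (by simp)]
  ring

/-- count of numbers ≡ 0 mod 2 in Ico a b -/
lemma card_even_Ico (a b : ℕ) :
    ((Ico a b).filter fun j => j % 2 = 0).card = (b + 1) / 2 - (a + 1) / 2 := by
  induction b with
  | zero =>
      rw [Finset.Ico_eq_empty (by omega)]
      simp only [filter_empty, card_empty]; omega
  | succ b ih =>
      by_cases hab : a ≤ b
      · rw [Nat.Ico_succ_right_eq_insert_Ico hab, filter_insert]
        split_ifs with h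
        · rw [card_insert_of_notMem (by simp)]
          omega
        · omega
      · rw [Finset.Ico_eq_empty (by omega)]
        simp only [filter_empty, card_empty]; omega

lemma card_odd_Ico (a b : ℕ) :
    ((Ico a b).filter fun j => j % 2 = 1).card = b / 2 - a / 2 := by
  induction b with
  | zero =>
      rw [Finset.Ico_eq_empty (by omega)]
      simp only [filter_empty, card_empty]; omega
  | succ b ih =>
      by_cases hab : a ≤ b
      · rw [Nat.Ico_succ_right_eq_insert_Ico hab, filter_insert]
        split_ifs with h
        · rw [card_insert_of_notMem (by simp)]
          omega
        · omega
      · rw [Finset.Ico_eq_empty (by omega)]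
        simp only [filter_empty, card_empty]; omega

section Rank

variable (T : Finset C) (key : C → ℕ)

/-- rank of an element by key inside T -/
def rnk (a : C) : ℕ := (T.filter fun b => key b < key a).card

variable (hkinj : ∀ a ∈ T, ∀ b ∈ T, key a = key b → a = b)

include hkinj

lemma rnk_lt_card {a : C} (ha : a ∈ T) : rnk T key a < T.card := by
  have hsub : T.filter (fun b => key b < key a) ⊆ T.erase a := by
    intro c hc
    rw [mem_filter] at hc
    exact mem_erase.2 ⟨fun h => by subst h; omega, hc.1⟩
  calc rnk T key a ≤ (T.erase a).card := card_le_card hsub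
  _ < T.card := by
      rw [card_erase_of_mem ha]
      have : 0 < T.card := card_pos.2 ⟨a, ha⟩
      omega

lemma rnk_strict {a b : C} (ha : a ∈ T) (hb : b ∈ T) (hab : key a < key b) :
    rnk T key a < rnk T key b := by
  apply card_lt_card
  constructor
  · intro c hc
    rw [mem_filter] at hc ⊢
    exact ⟨hc.1, by omega⟩
  · intro hsub
    have : a ∈ T.filter (fun c => key c < key b) := mem_filter.2 ⟨ha, hab⟩
    have h2 := hsub this
    rw [mem_filter] at h2
    omega

lemma rnk_injOn {a b : C} (ha : a ∈ T) (hb : b ∈ T)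
    (h : rnk T key a = rnk T key b) : a = b := by
  rcases lt_trichotomy (key a) (key b) with hlt | heq | hgt
  · have := rnk_strict T key hkinj ha hb hlt; omega
  · exact hkinj a ha b hb heq
  · have := rnk_strict T key hkinj hb ha hgt; omega

lemma image_rnk : T.image (rnk T key) = range T.card := by
  apply eq_of_subset_of_card_le
  · intro j hj
    rw [mem_image] at hj
    obtain ⟨a, ha, rfl⟩ := hj
    exact mem_range.2 (rnk_lt_card T key hkinj ha)
  · rw [card_range, card_image_of_injOn (fun a ha b hb => rnk_injOn T key hkinj ha hb)]

lemma filter_rnk_card (p : ℕ → Prop) [DecidablePred p] :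
    (T.filter fun a => p (rnk T key a)).card = ((range T.card).filter p).card := by
  rw [← card_image_of_injOn
    (fun a ha b hb h => rnk_injOn T key hkinj (mem_of_mem_filter a ha) (mem_of_mem_filter b hb) h)]
  congr 1
  ext j
  simp only [mem_image, mem_filter, mem_range]
  constructor
  · rintro ⟨a, ⟨haT, hpa⟩, rfl⟩
    exact ⟨rnk_lt_card T key hkinj haT, hpa⟩
  · rintro ⟨hj, hpj⟩
    have : j ∈ T.image (rnk T key) := by rw [image_rnk T key hkinj]; exact mem_range.2 hj
    rw [mem_image] at this
    obtain ⟨a, ha, rfl⟩ := this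
    exact ⟨a, ⟨ha, hpj⟩, rfl⟩

lemma rnk_lt_iff_mem {D : Finset C} (hDT : D ⊆ T)
    (hdown : ∀ b ∈ D, ∀ c ∈ T, key c < key b → c ∈ D)
    {a : C} (ha : a ∈ T) : rnk T key a < D.card ↔ a ∈ D := by
  constructor
  · intro h
    by_contra haD
    have hsub : D ⊆ T.filter (fun b => key b < key a) := by
      intro b hb
      rw [mem_filter]
      refine ⟨hDT hb, ?_⟩
      rcases lt_trichotomy (key b) (key a) with h1 | h1 | h1
      · exact h1
      · exact absurd (hkinj a ha b (hDT hb) h1.symm ▸ hb) haD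
      · exact absurd (hdown b hb a ha h1) haD
    have := card_le_card hsub
    unfold rnk at h
    omega
  · intro haD
    have hsub : T.filter (fun b => key b < key a) ⊆ D.erase a := by
      intro c hc
      rw [mem_filter] at hc
      refine mem_erase.2 ⟨fun h => by subst h; omega, hdown a haD c hc.1 hc.2⟩
    have h1 := card_le_card hsub
    have h2 : 0 < D.card := card_pos.2 ⟨a, haD⟩
    rw [card_erase_of_mem haD] at h1
    unfold rnk
    omega

end Rank


section Core

variable (V : Finset ℕ) (f : ℕ → ℕ → ℝ) (I : C → ℕ × ℕ)

/-- The antichain case: even/odd rank split. -/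
lemma core_antichain (hle : ∀ c : C, (I c).1 ≤ (I c).2)
    (t : ℕ) (T : Finset C) (hT : T.card = 2 * t) (o : ℕ → ℕ)
    (hanti : ∀ a ∈ T, ∀ b ∈ T, a ≠ b → ¬((I a).1 ≤ (I b).1 ∧ (I b).2 ≤ (I a).2)) :
    ∃ X ⊆ T, X.card = t ∧
      ∑ v ∈ V, (f v (o v + cnt I T v / 2) + f v (o v + (cnt I T v + 1) / 2))
        ≤ 2 * ∑ v ∈ V, f v (o v + cnt I X v) := by
  classical
  set key : C → ℕ := fun c => (I c).1 with hkey
  have hkinj : ∀ a ∈ T, ∀ b ∈ T, key a = key b → a = b := by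
    intro a ha b hb hk
    by_contra hab
    rcases le_total (I b).2 (I a).2 with h | h
    · exact hanti a ha b hb hab ⟨le_of_eq hk, h⟩
    · exact hanti b hb a ha (Ne.symm hab) ⟨le_of_eq hk.symm, h⟩
  have hmono : ∀ a ∈ T, ∀ b ∈ T, key a < key b → (I a).2 < (I b).2 := by
    intro a ha b hb hk
    by_contra h
    exact hanti a ha b hb (fun he => by subst he; omega) ⟨le_of_lt hk, by omega⟩
  set R : C → ℕ := fun a => rnk T key a with hR
  set X : Finset C := T.filter (fun a => R a % 2 = 0) with hX
  set Y : Finset C := T.filter (fun a => R a % 2 = 1) with hY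
  set N := T.card with hN
  -- cardinalities of X and Y
  have hrange : ∀ p : ℕ → Prop, ∀ [DecidablePred p],
      (T.filter fun a => p (R a)).card = ((range N).filter p).card := by
    intro p hp
    exact filter_rnk_card T key hkinj p
  have hXcard : X.card = t := by
    rw [hX, hrange (fun j => j % 2 = 0), range_eq_Ico, card_even_Ico]
    omega
  have hYcard : Y.card = t := by
    rw [hY, hrange (fun j => j % 2 = 1), range_eq_Ico, card_odd_Ico]
    omega
  -- per-voter counts
  have hcounts : ∀ v : ℕ,
      cnt I X v + cnt I Y v = cnt I T v ∧
      (cnt I X v = cnt I T v / 2 ∧ cnt I Y v = (cnt I T v + 1) / 2 ∨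
       cnt I X v = (cnt I T v + 1) / 2 ∧ cnt I Y v = cnt I T v / 2) := by
    intro v
    set lo := (T.filter fun b => (I b).2 < v).card with hlo
    set hi := (T.filter fun b => (I b).1 ≤ v).card with hhi
    have hlo_iff : ∀ a ∈ T, (R a < lo ↔ (I a).2 < v) := by
      intro a ha
      rw [hlo]
      exact rnk_lt_iff_mem T key hkinj (filter_subset _ _)
        (fun b hb c hc hkc => by
          rw [mem_filter] at hb ⊢
          exact ⟨hc, lt_trans (hmono c hc b hb.1 hkc) hb.2⟩) ha
        |>.trans (by rw [mem_filter]; tauto)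
    have hhi_iff : ∀ a ∈ T, (R a < hi ↔ (I a).1 ≤ v) := by
      intro a ha
      rw [hhi]
      exact rnk_lt_iff_mem T key hkinj (filter_subset _ _)
        (fun b hb c hc hkc => by
          rw [mem_filter] at hb ⊢
          exact ⟨hc, by have := hb.2; simp only [hkey] at hkc ⊢; omega⟩) ha
        |>.trans (by rw [mem_filter]; tauto)
    have hlohi : lo ≤ hi := by
      apply card_le_card
      intro b hb
      rw [mem_filter] at hb ⊢
      exact ⟨hb.1, le_of_lt (lt_of_le_of_lt (hle b) hb.2)⟩
    have hhiN : hi ≤ N := card_le_card (filter_subset _ _)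
    have hcov : ∀ a ∈ T, (((I a).1 ≤ v ∧ v ≤ (I a).2) ↔ (lo ≤ R a ∧ R a < hi)) := by
      intro a ha
      have h1 := hlo_iff a ha
      have h2 := hhi_iff a ha
      omega
    have hTv : cnt I T v = hi - lo := by
      unfold cnt
      rw [filter_congr (fun a ha => hcov a ha)]
      rw [hrange (fun j => lo ≤ j ∧ j < hi)]
      have : (range N).filter (fun j => lo ≤ j ∧ j < hi) = Ico lo hi := by
        ext j
        simp only [mem_filter, mem_range, mem_Ico]
        omega
      rw [this, Nat.card_Ico]
    have hXv : cnt I X v = (hi + 1) / 2 - (lo + 1) / 2 := by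
      unfold cnt
      rw [hX, filter_filter]
      rw [filter_congr (fun a ha => (by
        constructor
        · rintro ⟨h1, h2⟩; exact ⟨(hcov a ha).1 h2, h1⟩
        · rintro ⟨h1, h2⟩; exact ⟨h2, (hcov a ha).2 h1⟩ :
          ((R a % 2 = 0 ∧ ((I a).1 ≤ v ∧ v ≤ (I a).2)) ↔
            ((lo ≤ R a ∧ R a < hi) ∧ R a % 2 = 0))))]
      rw [hrange (fun j => (lo ≤ j ∧ j < hi) ∧ j % 2 = 0)]
      have : (range N).filter (fun j => (lo ≤ j ∧ j < hi) ∧ j % 2 = 0)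
          = (Ico lo hi).filter (fun j => j % 2 = 0) := by
        ext j
        simp only [mem_filter, mem_range, mem_Ico]
        omega
      rw [this, card_even_Ico]
    have hYv : cnt I Y v = hi / 2 - lo / 2 := by
      unfold cnt
      rw [hY, filter_filter]
      rw [filter_congr (fun a ha => (by
        constructor
        · rintro ⟨h1, h2⟩; exact ⟨(hcov a ha).1 h2, h1⟩
        · rintro ⟨h1, h2⟩; exact ⟨h2, (hcov a ha).2 h1⟩ :
          ((R a % 2 = 1 ∧ ((I a).1 ≤ v ∧ v ≤ (I a).2)) ↔
            ((lo ≤ R a ∧ R a < hi) ∧ R a % 2 = 1))))]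
      rw [hrange (fun j => (lo ≤ j ∧ j < hi) ∧ j % 2 = 1)]
      have : (range N).filter (fun j => (lo ≤ j ∧ j < hi) ∧ j % 2 = 1)
          = (Ico lo hi).filter (fun j => j % 2 = 1) := by
        ext j
        simp only [mem_filter, mem_range, mem_Ico]
        omega
      rw [this, card_odd_Ico]
    rw [hTv, hXv, hYv]
    omega
  -- the sum identity
  have hsum : ∑ v ∈ V, (f v (o v + cnt I T v / 2) + f v (o v + (cnt I T v + 1) / 2))
      = (∑ v ∈ V, f v (o v + cnt I X v)) + ∑ v ∈ V, f v (o v + cnt I Y v) := by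
    rw [← sum_add_distrib]
    apply sum_congr rfl
    intro v hv
    rcases (hcounts v).2 with ⟨h1, h2⟩ | ⟨h1, h2⟩
    · rw [h1, h2]
    · rw [h1, h2]; exact add_comm _ _
  rcases le_total (∑ v ∈ V, f v (o v + cnt I Y v)) (∑ v ∈ V, f v (o v + cnt I X v)) with h | h
  · exact ⟨X, filter_subset _ _, hXcard, by rw [hsum]; linarith⟩
  · exact ⟨Y, filter_subset _ _, hYcard, by rw [hsum]; linarith⟩

/-- Core lemma: a half-size subcommittee achieving the balanced fractional bound. -/
lemma core (hf : ∀ v ∈ V, Monotone (f v)) (hle : ∀ c : C, (I c).1 ≤ (I c).2) :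
    ∀ t : ℕ, ∀ T : Finset C, T.card = 2 * t → ∀ o : ℕ → ℕ,
    ∃ X ⊆ T, X.card = t ∧
      ∑ v ∈ V, (f v (o v + cnt I T v / 2) + f v (o v + (cnt I T v + 1) / 2))
        ≤ 2 * ∑ v ∈ V, f v (o v + cnt I X v) := by
  intro t
  induction t with
  | zero =>
      intro T hT o
      rw [mul_zero, card_eq_zero] at hT
      subst hT
      refine ⟨∅, subset_rfl, card_empty, le_of_eq ?_⟩
      have : ∀ v : ℕ, cnt I (∅ : Finset C) v = 0 := by
        intro v; unfold cnt; simp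
      simp only [this]
      rw [two_mul, ← sum_add_distrib]
  | succ t ih =>
      intro T hT o
      by_cases hnest : ∃ a ∈ T, ∃ b ∈ T, a ≠ b ∧ (I a).1 ≤ (I b).1 ∧ (I b).2 ≤ (I a).2
      · obtain ⟨a, ha, b, hb, hab, hl, hr⟩ := hnest
        have hbea : b ∈ T.erase a := mem_erase.2 ⟨Ne.symm hab, hb⟩
        set T' : Finset C := (T.erase a).erase b with hT'def
        have haT' : a ∉ T' := fun h => (notMem_erase a T) (mem_of_mem_erase h)
        have hbT' : b ∉ T' := notMem_erase b _
        have hins1 : insert b T' = T.erase a := insert_erase hbea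
        have hins2 : insert a (insert b T') = T := by rw [hins1]; exact insert_erase ha
        have haib : a ∉ insert b T' := by
          rw [hins1]; exact notMem_erase a T
        have hT'card : T'.card = 2 * t := by
          have h1 : (T.erase a).card = T.card - 1 := card_erase_of_mem ha
          have h2 : T'.card = (T.erase a).card - 1 := card_erase_of_mem hbea
          have h3 : 0 < T.card := card_pos.2 ⟨a, ha⟩
          omega
        set χa : ℕ → ℕ := fun v => if (I a).1 ≤ v ∧ v ≤ (I a).2 then 1 else 0 with hχa
        set χb : ℕ → ℕ := fun v => if (I b).1 ≤ v ∧ v ≤ (I b).2 then 1 else 0 with hχb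
        set o' : ℕ → ℕ := fun v => o v + χa v with ho'
        obtain ⟨X', hX'T, hX'card, hX'⟩ := ih T' hT'card o'
        have haX' : a ∉ X' := fun h => haT' (hX'T h)
        refine ⟨insert a X', ?_, ?_, ?_⟩
        · intro c hc
          rcases mem_insert.1 hc with rfl | hc'
          · exact ha
          · exact mem_of_mem_erase (mem_of_mem_erase (hX'T hc'))
        · rw [card_insert_of_notMem haX', hX'card]
        · have hcntX : ∀ v, o v + cnt I (insert a X') v = o' v + cnt I X' v := by
            intro v
            rw [cnt_insert I haX' v, ho', hχa]
            by_cases h : (I a).1 ≤ v ∧ v ≤ (I a).2 <;> simp [h] <;> omega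
          have hcntT : ∀ v, cnt I T v = cnt I T' v + χa v + χb v := by
            intro v
            have hifa : (if (I a).1 ≤ v ∧ v ≤ (I a).2 then 1 else 0) = χa v := rfl
            have hifb : (if (I b).1 ≤ v ∧ v ≤ (I b).2 then 1 else 0) = χb v := rfl
            rw [← hins2, cnt_insert I haib v, cnt_insert I hbT' v, hifa, hifb]
            omega
          have hba : ∀ v, χb v = 1 → χa v = 1 := by
            intro v h
            by_cases h3 : (I b).1 ≤ v ∧ v ≤ (I b).2
            · have h4 : (I a).1 ≤ v ∧ v ≤ (I a).2 := ⟨le_trans hl h3.1, le_trans h3.2 hr⟩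
              simp [hχa, h4]
            · exfalso
              have : χb v = 0 := by simp [hχb, h3]
              omega
          have hpoint : ∀ v ∈ V,
              f v (o v + cnt I T v / 2) + f v (o v + (cnt I T v + 1) / 2)
              ≤ f v (o' v + cnt I T' v / 2) + f v (o' v + (cnt I T' v + 1) / 2) := by
            intro v hv
            have hTv := hcntT v
            have ho'v : o' v = o v + χa v := rfl
            have hχav : χa v = 0 ∨ χa v = 1 := by
              simp only [hχa]; split_ifs <;> simp
            have hχbv : χb v = 0 ∨ χb v = 1 := by
              simp only [hχb]; split_ifs <;> simp
            set m := cnt I T' v with hm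
            rcases hχav with h0 | h1
            · -- χa = 0 hence χb = 0
              have hb0 : χb v = 0 := by
                rcases hχbv with h | h
                · exact h
                · have := hba v h; omega
              have e1 : o v + cnt I T v / 2 = o' v + m / 2 := by omega
              have e2 : o v + (cnt I T v + 1) / 2 = o' v + (m + 1) / 2 := by omega
              rw [e1, e2]
            · rcases hχbv with hb0 | hb1
              · -- χa = 1, χb = 0 : cnt T = m + 1
                have e2 : o v + (cnt I T v + 1) / 2 = o' v + m / 2 := by omega
                rw [e2]
                have hle1 : o v + cnt I T v / 2 ≤ o' v + (m + 1) / 2 := by omega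
                have h2 := hf v hv hle1
                linarith
              · -- χa = 1, χb = 1 : cnt T = m + 2
                have e1 : o v + cnt I T v / 2 = o' v + m / 2 := by omega
                have e2 : o v + (cnt I T v + 1) / 2 = o' v + (m + 1) / 2 := by omega
                rw [e1, e2]
          calc ∑ v ∈ V, (f v (o v + cnt I T v / 2) + f v (o v + (cnt I T v + 1) / 2))
              ≤ ∑ v ∈ V, (f v (o' v + cnt I T' v / 2) + f v (o' v + (cnt I T' v + 1) / 2)) :=
                sum_le_sum hpoint
            _ ≤ 2 * ∑ v ∈ V, f v (o' v + cnt I X' v) := hX'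
            _ = 2 * ∑ v ∈ V, f v (o v + cnt I (insert a X') v) := by
                congr 1
                apply sum_congr rfl
                intro v hv
                rw [hcntX v]
      · apply core_antichain V f I hle (t+1) T hT o
        intro x hx y hy hxy
        intro hcon
        exact hnest ⟨x, hx, y, hy, hxy, hcon⟩

end Core

section Concave

variable (u : ℕ → ℝ)

lemma Fsplit (x : ℕ) : ∀ δ : ℕ,
    ∑ i ∈ Icc 1 (x + δ), u i = (∑ i ∈ Icc 1 x, u i) + ∑ i ∈ Icc (x + 1) (x + δ), u i := by
  intro δ
  induction δ with
  | zero =>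
      rw [Finset.Icc_eq_empty (by omega : ¬ x + 1 ≤ x + 0)]
      simp
  | succ δ ih =>
      have h1 : x + (δ + 1) = (x + δ) + 1 := by omega
      rw [h1, sum_Icc_top u (by omega), show x + δ + 1 = x + (δ + 1) by omega]
      rw [show x + (δ + 1) = x + δ + 1 by omega, sum_Icc_top u (by omega)]
      rw [show x + δ = x + δ by rfl] at ih
      rw [show (∑ i ∈ Icc 1 (x + δ), u i) = (∑ i ∈ Icc 1 x, u i) + ∑ i ∈ Icc (x + 1) (x + δ), u i from ih]
      ring

lemma shiftsum (hm : ∀ i j : ℕ, 1 ≤ i → i ≤ j → u j ≤ u i) {a c : ℕ} (hac : a ≤ c) :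
    ∀ δ : ℕ, ∑ i ∈ Icc (c + 1) (c + δ), u i ≤ ∑ i ∈ Icc (a + 1) (a + δ), u i := by
  intro δ
  induction δ with
  | zero =>
      rw [Finset.Icc_eq_empty (by omega : ¬ c + 1 ≤ c + 0),
          Finset.Icc_eq_empty (by omega : ¬ a + 1 ≤ a + 0)]
  | succ δ ih =>
      rw [show c + (δ + 1) = c + δ + 1 by omega, sum_Icc_top u (by omega)]
      rw [show a + (δ + 1) = a + δ + 1 by omega, sum_Icc_top u (by omega)]
      exact add_le_add ih (hm (a + δ + 1) (c + δ + 1) (by omega) (by omega))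

lemma conc_aux (hm : ∀ i j : ℕ, 1 ≤ i → i ≤ j → u j ≤ u i) {a b : ℕ} (hab : a ≤ b) :
    (∑ i ∈ Icc 1 a, u i) + (∑ i ∈ Icc 1 b, u i)
      ≤ (∑ i ∈ Icc 1 ((a + b) / 2), u i) + ∑ i ∈ Icc 1 ((a + b + 1) / 2), u i := by
  set h := (a + b + 1) / 2 with hh
  set δ := b - h with hδ
  have h1 : b = h + δ := by omega
  have h2 : (a + b) / 2 = a + δ := by omega
  have h3 : a ≤ h := by omega
  rw [h2, h1, Fsplit u h δ, Fsplit u a δ]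
  have := shiftsum u hm h3 δ
  linarith

lemma conc (hm : ∀ i j : ℕ, 1 ≤ i → i ≤ j → u j ≤ u i) (a b : ℕ) :
    (∑ i ∈ Icc 1 a, u i) + (∑ i ∈ Icc 1 b, u i)
      ≤ (∑ i ∈ Icc 1 ((a + b) / 2), u i) + ∑ i ∈ Icc 1 ((a + b + 1) / 2), u i := by
  rcases le_total a b with h | h
  · exact conc_aux u hm h
  · have := conc_aux u hm h
    rw [show b + a = a + b by omega] at this
    linarith

end Concave

end Stmt12

/-- concavity of the optimal Generalized Thiele score on Voter Interval
profiles: Voters are `{1,…,n}`, `C` is a finite set of candidates, each candidate `c`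
has a nonempty supporter interval `{(I c).1, …, (I c).2} ⊆ {1,…,n}`.  Each voter `v`
has a non-increasing weight sequence `w v : ℕ → ℝ` with `1 ≥ w v 1 ≥ w v 2 ≥ … ≥ 0`,
and `score W = ∑_{v=1}^n ∑_{i=1}^{|{c ∈ W : v ∈ I c}|} w v i`.  Then for every `k ≥ 1`
and committees `S, S'` with `|S| = k − 1`, `|S'| = k + 1`, there is a committee
`W ⊆ S ∪ S'` with `|W| = k` and `2·score W ≥ score S + score S'`. -/
theorem stmt_12 (n : ℕ) {C : Type*} [Fintype C] [DecidableEq C]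
    (I : C → ℕ × ℕ)
    (hI : ∀ c, 1 ≤ (I c).1 ∧ (I c).1 ≤ (I c).2 ∧ (I c).2 ≤ n)
    (w : ℕ → ℕ → ℝ)
    (hw1 : ∀ v ∈ Finset.Icc 1 n, w v 1 ≤ 1)
    (hw0 : ∀ v ∈ Finset.Icc 1 n, ∀ i : ℕ, 0 ≤ w v i)
    (hwmono : ∀ v ∈ Finset.Icc 1 n, ∀ i : ℕ, 1 ≤ i → w v (i + 1) ≤ w v i)
    (score : Finset C → ℝ)
    (hscore : ∀ W : Finset C, score W = ∑ v ∈ Finset.Icc 1 n,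
      ∑ i ∈ Finset.Icc 1 ((W.filter fun c => (I c).1 ≤ v ∧ v ≤ (I c).2).card), w v i)
    (k : ℕ) (hk : 1 ≤ k) (S S' : Finset C)
    (hScard : S.card = k - 1) (hS'card : S'.card = k + 1) :
    ∃ W ⊆ S ∪ S', W.card = k ∧ score S + score S' ≤ 2 * score W := by
  classical
  set V := Finset.Icc 1 n with hV
  set f : ℕ → ℕ → ℝ := fun v m => ∑ i ∈ Finset.Icc 1 m, w v i with hf_def
  have hwmono' : ∀ v ∈ V, ∀ i j : ℕ, 1 ≤ i → i ≤ j → w v j ≤ w v i := by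
    intro v hv i j h1 hij
    induction j, hij using Nat.le_induction with
    | base => exact le_refl _
    | succ j hij ih => exact le_trans (hwmono v hv j (by omega)) ih
  have hfmono : ∀ v ∈ V, Monotone (f v) := by
    intro v hv m m' hmm
    apply Finset.sum_le_sum_of_subset_of_nonneg (Finset.Icc_subset_Icc_right hmm)
    intro i _ _
    exact hw0 v hv i
  have hle : ∀ c : C, (I c).1 ≤ (I c).2 := fun c => (hI c).2.1
  set D := S ∩ S' with hD
  set T := (S ∪ S') \ D with hT
  have hDsub : D ⊆ S ∪ S' := Finset.inter_subset_left.trans Finset.subset_union_left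
  have hcardD : D.card ≤ k - 1 := hScard ▸ Finset.card_le_card Finset.inter_subset_left
  have hcardsum := Finset.card_union_add_card_inter S S'
  have hTcard : T.card = 2 * (k - D.card) := by
    have hDcard' : D.card = (S ∩ S').card := rfl
    rw [hT, Finset.card_sdiff_of_subset hDsub]
    omega
  obtain ⟨X, hXT, hXcard, hXineq⟩ :=
    Stmt12.core V f I hfmono hle (k - D.card) T hTcard (fun v => Stmt12.cnt I D v)
  have hdisjDX : Disjoint D X :=
    (Finset.disjoint_of_subset_left hXT Finset.sdiff_disjoint).symm
  refine ⟨D ∪ X, ?_, ?_, ?_⟩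
  · intro c hc
    rcases Finset.mem_union.1 hc with h | h
    · exact hDsub h
    · exact Finset.sdiff_subset (hXT h)
  · rw [Finset.card_union_of_disjoint hdisjDX, hXcard]
    omega
  · have hsc : ∀ W : Finset C, score W = ∑ v ∈ V, f v (Stmt12.cnt I W v) := fun W => hscore W
    rw [hsc S, hsc S', hsc (D ∪ X)]
    have hdisjP : Disjoint D (S \ S') :=
      (Finset.disjoint_of_subset_right (hD ▸ Finset.inter_subset_right) Finset.sdiff_disjoint).symm
    have hdisjQ : Disjoint D (S' \ S) :=
      (Finset.disjoint_of_subset_right (hD ▸ Finset.inter_subset_left) Finset.sdiff_disjoint).symm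
    have hSsplit : D ∪ (S \ S') = S := by
      ext c; simp only [hD, Finset.mem_union, Finset.mem_inter, Finset.mem_sdiff]; tauto
    have hS'split : D ∪ (S' \ S) = S' := by
      ext c; simp only [hD, Finset.mem_union, Finset.mem_inter, Finset.mem_sdiff]; tauto
    have hTsplit : (S \ S') ∪ (S' \ S) = T := by
      ext c
      simp only [hT, hD, Finset.mem_union, Finset.mem_inter, Finset.mem_sdiff]
      tauto
    have hdisjPQ : Disjoint (S \ S') (S' \ S) :=
      Finset.disjoint_of_subset_right Finset.sdiff_subset Finset.sdiff_disjoint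
    have hpoint : ∀ v ∈ V,
        f v (Stmt12.cnt I S v) + f v (Stmt12.cnt I S' v)
          ≤ f v (Stmt12.cnt I D v + Stmt12.cnt I T v / 2)
            + f v (Stmt12.cnt I D v + (Stmt12.cnt I T v + 1) / 2) := by
      intro v hv
      have hS1 : Stmt12.cnt I S v = Stmt12.cnt I D v + Stmt12.cnt I (S \ S') v := by
        have h := Stmt12.cnt_union I hdisjP v
        rw [hSsplit] at h
        exact h
      have hS2 : Stmt12.cnt I S' v = Stmt12.cnt I D v + Stmt12.cnt I (S' \ S) v := by
        have h := Stmt12.cnt_union I hdisjQ v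
        rw [hS'split] at h
        exact h
      have hT2 : Stmt12.cnt I T v = Stmt12.cnt I (S \ S') v + Stmt12.cnt I (S' \ S) v := by
        have h := Stmt12.cnt_union I hdisjPQ v
        rw [hTsplit] at h
        exact h
      have hconc := Stmt12.conc (w v) (hwmono' v hv) (Stmt12.cnt I S v) (Stmt12.cnt I S' v)
      have e1 : (Stmt12.cnt I S v + Stmt12.cnt I S' v) / 2
          = Stmt12.cnt I D v + Stmt12.cnt I T v / 2 := by omega
      have e2 : (Stmt12.cnt I S v + Stmt12.cnt I S' v + 1) / 2
          = Stmt12.cnt I D v + (Stmt12.cnt I T v + 1) / 2 := by omega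
      rw [e1, e2] at hconc
      exact hconc
    calc (∑ v ∈ V, f v (Stmt12.cnt I S v)) + ∑ v ∈ V, f v (Stmt12.cnt I S' v)
        = ∑ v ∈ V, (f v (Stmt12.cnt I S v) + f v (Stmt12.cnt I S' v)) :=
          (Finset.sum_add_distrib).symm
      _ ≤ ∑ v ∈ V, (f v (Stmt12.cnt I D v + Stmt12.cnt I T v / 2)
            + f v (Stmt12.cnt I D v + (Stmt12.cnt I T v + 1) / 2)) :=
          Finset.sum_le_sum hpoint
      _ ≤ 2 * ∑ v ∈ V, f v (Stmt12.cnt I D v + Stmt12.cnt I X v) := hXineq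
      _ = 2 * ∑ v ∈ V, f v (Stmt12.cnt I (D ∪ X) v) := by
          congr 1
          apply Finset.sum_congr rfl
          intro v hv
          rw [Stmt12.cnt_union I hdisjDX]
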